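/- arXiv:2603.08389 — 2 statements merged into one kernel-verified Lean document; each statement's English description precedes it below -/
import Mathlib

section
/- Let N ≥ 1 be a natural number, and let α > 0, I₀ ≥ 0, c > 0, σ² > 0 be real numbers. Define f : [0, N−1] → ℝ by f(ℓ) = (N − ℓ) / (c·(I₀ − αℓ)² + σ²). If the stationary point ℓ* = N − √((N − I₀/α)² + σ²/(α²c)) lies in [0, N−1], then f attains its maximum on [0, N−1] at ℓ = ℓ*. -/
/-- The array gain vs. residual interference function `f(ℓ) = (N−ℓ)/(c(I₀−αℓ)²+σ²)`
attains its maximum on `[0, N−1]` at the stationary point `ℓ*`. -/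
theorem stmt_3 (N : ℕ) (hN : 1 ≤ N) (α I₀ c sigma2 : ℝ)
    (hα : 0 < α) (hI₀ : 0 ≤ I₀) (hc : 0 < c) (hs : 0 < sigma2)
    (f : ℝ → ℝ)
    (hf : ∀ ℓ, f ℓ = ((N : ℝ) - ℓ) / (c * (I₀ - α * ℓ) ^ 2 + sigma2))
    (ℓstar : ℝ)
    (hℓstar : ℓstar = (N : ℝ) - Real.sqrt (((N : ℝ) - I₀ / α) ^ 2 + sigma2 / (α ^ 2 * c)))
    (hmem : ℓstar ∈ Set.Icc (0 : ℝ) ((N : ℝ) - 1)) :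
    ∀ ℓ ∈ Set.Icc (0 : ℝ) ((N : ℝ) - 1), f ℓ ≤ f ℓstar := by
  intro ℓ hℓ
  set S : ℝ := Real.sqrt (((N : ℝ) - I₀ / α) ^ 2 + sigma2 / (α ^ 2 * c)) with hS
  have hSnn : 0 ≤ S := Real.sqrt_nonneg _
  have harg : 0 ≤ ((N : ℝ) - I₀ / α) ^ 2 + sigma2 / (α ^ 2 * c) := by positivity
  have hS2 : S ^ 2 = ((N : ℝ) - I₀ / α) ^ 2 + sigma2 / (α ^ 2 * c) :=
    Real.sq_sqrt harg
  have hαne : α ≠ 0 := ne_of_gt hα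
  have hS2' : α ^ 2 * c * S ^ 2 = c * (α * (N : ℝ) - I₀) ^ 2 + sigma2 := by
    rw [hS2]; field_simp
  have hd1 : 0 < c * (I₀ - α * ℓ) ^ 2 + sigma2 := by positivity
  have hd2 : 0 < c * (I₀ - α * ℓstar) ^ 2 + sigma2 := by positivity
  rw [hf, hf, div_le_div_iff₀ hd1 hd2]
  subst hℓstar
  have hkey : 0 ≤ c * α ^ 2 * S * ((N : ℝ) - ℓ - S) ^ 2 := by positivity
  have h4 : (S - ((N : ℝ) - ℓ)) * (α ^ 2 * c * S ^ 2)
      = (S - ((N : ℝ) - ℓ)) * (c * (α * (N : ℝ) - I₀) ^ 2 + sigma2) := by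
    rw [hS2']
  nlinarith [hkey, h4]
end

section
/- Let a, b: ℝ → ℝ with a(ℓ) = N − ℓ and b(ℓ) = c(I₀ − αℓ)² + σ², with N, c, α, σ² > 0 and I₀/α ≤ N. Then the function f(ℓ) = a(ℓ)/b(ℓ) is unimodal on (−∞, N]: it is nondecreasing on (−∞, ℓ*] and nonincreasing on [ℓ*, N], where ℓ* = N − √((N − I₀/α)² + σ²/(α²c)). -/
/-- Unimodality of `f(ℓ) = (N−ℓ)/(c(I₀−αℓ)²+σ²)` on `(−∞, N]`: nondecreasing up to the
stationary point `ℓ*` and nonincreasing from `ℓ*` to `N`. -/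
theorem stmt_19 (N c α sigma2 I₀ : ℝ)
    (hN : 0 < N) (hc : 0 < c) (hα : 0 < α) (hs : 0 < sigma2) (hI : I₀ / α ≤ N)
    (f : ℝ → ℝ)
    (hf : ∀ ℓ, f ℓ = (N - ℓ) / (c * (I₀ - α * ℓ) ^ 2 + sigma2))
    (ℓstar : ℝ)
    (hℓ : ℓstar = N - Real.sqrt ((N - I₀ / α) ^ 2 + sigma2 / (α ^ 2 * c))) :
    MonotoneOn f (Set.Iic ℓstar) ∧ AntitoneOn f (Set.Icc ℓstar N) := by
  have hfe : f = fun ℓ => (N - ℓ) / (c * (I₀ - α * ℓ) ^ 2 + sigma2) := funext hf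
  subst hfe
  have hb : ∀ ℓ : ℝ, 0 < c * (I₀ - α * ℓ) ^ 2 + sigma2 := fun ℓ => by positivity
  set d := N - I₀ / α with hdd
  have hd0 : 0 ≤ d := by simp [hdd]; linarith
  set S := Real.sqrt (d ^ 2 + sigma2 / (α ^ 2 * c)) with hSS
  have hS2 : S ^ 2 = d ^ 2 + sigma2 / (α ^ 2 * c) := Real.sq_sqrt (by positivity)
  have hS0 : 0 ≤ S := Real.sqrt_nonneg _
  have hαd : α * d = α * N - I₀ := by
    field_simp [hdd]
    rw [hdd]; field_simp
  have hac : (0:ℝ) < α ^ 2 * c := by positivity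
  have hsig : α ^ 2 * c * (sigma2 / (α ^ 2 * c)) = sigma2 := by
    field_simp
  -- derivative
  have hderiv : ∀ ℓ : ℝ,
      HasDerivAt (fun ℓ => (N - ℓ) / (c * (I₀ - α * ℓ) ^ 2 + sigma2))
        (((-1) * (c * (I₀ - α * ℓ) ^ 2 + sigma2)
          - (N - ℓ) * (c * (2 * (I₀ - α * ℓ) ^ 1 * (-α))))
          / (c * (I₀ - α * ℓ) ^ 2 + sigma2) ^ 2) ℓ := by
    intro ℓ
    have h1 : HasDerivAt (fun x : ℝ => N - x) (-1) ℓ := by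
      simpa using (hasDerivAt_id ℓ).const_sub N
    have h2 : HasDerivAt (fun x : ℝ => I₀ - α * x) (-α) ℓ := by
      simpa using ((hasDerivAt_id ℓ).const_mul α).const_sub I₀
    have h3 : HasDerivAt (fun x : ℝ => c * (I₀ - α * x) ^ 2 + sigma2)
        (c * (2 * (I₀ - α * ℓ) ^ 1 * (-α))) ℓ :=
      ((h2.pow 2).const_mul c).add_const sigma2
    exact h1.div h3 (ne_of_gt (hb ℓ))
  have hdiff : ∀ ℓ : ℝ,
      DifferentiableAt ℝ (fun ℓ => (N - ℓ) / (c * (I₀ - α * ℓ) ^ 2 + sigma2)) ℓ :=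
    fun ℓ => (hderiv ℓ).differentiableAt
  have hcont : Continuous (fun ℓ => (N - ℓ) / (c * (I₀ - α * ℓ) ^ 2 + sigma2)) :=
    (Differentiable.continuous (fun x => hdiff x))
  -- key numerator sign facts
  have hnum : ∀ ℓ : ℝ,
      ((-1) * (c * (I₀ - α * ℓ) ^ 2 + sigma2)
          - (N - ℓ) * (c * (2 * (I₀ - α * ℓ) ^ 1 * (-α))))
        = α ^ 2 * c * ((N - ℓ) ^ 2 - d ^ 2) - sigma2 := by
    intro ℓ
    have hI₀ : I₀ = α * N - α * d := by linarith [hαd]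
    rw [hI₀]; ring
  constructor
  · apply monotoneOn_of_deriv_nonneg (convex_Iic ℓstar) hcont.continuousOn
    · exact fun x _ => (hdiff x).differentiableWithinAt
    · intro x hx
      rw [interior_Iic] at hx
      rw [(hderiv x).deriv]
      apply div_nonneg _ (by positivity)
      rw [hnum x]
      have hxl : x ≤ ℓstar := le_of_lt hx
      have hu : S ≤ N - x := by rw [hℓ] at hxl; linarith
      have hu2 : S ^ 2 ≤ (N - x) ^ 2 := by nlinarith
      have hkey : α ^ 2 * c * S ^ 2 = α ^ 2 * c * d ^ 2 + sigma2 := by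
        rw [hS2]; rw [mul_add, hsig]
      linarith [mul_le_mul_of_nonneg_left hu2 hac.le]
  · apply antitoneOn_of_deriv_nonpos (convex_Icc ℓstar N) hcont.continuousOn
    · exact fun x _ => (hdiff x).differentiableWithinAt
    · intro x hx
      rw [interior_Icc] at hx
      rw [(hderiv x).deriv]
      apply div_nonpos_of_nonpos_of_nonneg _ (by positivity)
      rw [hnum x]
      have hu : N - x ≤ S := by
        have := hx.1; rw [hℓ] at this; linarith
      have hu0 : 0 ≤ N - x := by linarith [hx.2]
      have hu2 : (N - x) ^ 2 ≤ S ^ 2 := by nlinarith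
      have hkey : α ^ 2 * c * S ^ 2 = α ^ 2 * c * d ^ 2 + sigma2 := by
        rw [hS2]; rw [mul_add, hsig]
      linarith [mul_le_mul_of_nonneg_left hu2 hac.le]
end
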